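/- Let d ≥ 2 and let T_R, T_B be finite nonempty sets in ℝ^d. Then the set P_0(T) ⊆ ℙ¹(ℝ) is closed in the real projective line and is preconnected (connected whenever nonempty). -/

import Mathlib

open scoped RealInnerProductSpace
open scoped Pointwise

/-- The real projective line `ℙ¹(ℝ)`, carrying the quotient topology from `ℝ² \ {0}`. -/
noncomputable instance : TopologicalSpace (Projectivization ℝ (Fin 2 → ℝ)) :=
  instTopologicalSpaceQuotient (s := projectivizationSetoid ℝ (Fin 2 → ℝ))

/-- The vector `e(a,b) = (a, b, 0, …, 0) ∈ ℝ^d`. -/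
noncomputable def evec (d : ℕ) (a b : ℝ) : EuclideanSpace ℝ (Fin d) :=
  WithLp.toLp 2 (fun i : Fin d => if (i : ℕ) = 0 then a else if (i : ℕ) = 1 then b else 0)

/-- `P_0(T) ⊆ ℙ¹(ℝ)`: the set of directions `u = [a : b]` such that there are
`r ∈ conv(T_R)`, `s ∈ conv(T_B)` and `t ∈ ℝ` with `r − s = t · e(a,b)`,
i.e. the projections of the two convex hulls onto the subspace
`{x : a x₁ + b x₂ = 0}` intersect. -/
def P0 (d : ℕ) (TR TB : Finset (EuclideanSpace ℝ (Fin d))) :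
    Set (Projectivization ℝ (Fin 2 → ℝ)) :=
  {u | ∃ (v : Fin 2 → ℝ) (hv : v ≠ 0), Projectivization.mk ℝ v hv = u ∧
    ∃ r ∈ convexHull ℝ (TR : Set (EuclideanSpace ℝ (Fin d))),
      ∃ s ∈ convexHull ℝ (TB : Set (EuclideanSpace ℝ (Fin d))),
        ∃ t : ℝ, r - s = t • evec d (v 0) (v 1)}

/-! ### Auxiliary lemmas -/

lemma evec_smul (d : ℕ) (t a b : ℝ) :
    t • evec d a b = evec d (t * a) (t * b) := by
  ext i
  simp only [evec, PiLp.smul_apply, PiLp.toLp_apply, smul_eq_mul]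
  split_ifs <;> ring

lemma evec_comb (d : ℕ) (a b x y x' y' : ℝ) :
    evec d (a * x + b * x') (a * y + b * y')
      = a • evec d x y + b • evec d x' y' := by
  ext i
  simp only [evec, PiLp.add_apply, PiLp.smul_apply, PiLp.toLp_apply, smul_eq_mul]
  split_ifs <;> ring

lemma evec_zero (d : ℕ) : evec d 0 0 = 0 := by
  ext i
  simp [evec]

lemma evec_continuous (d : ℕ) :
    Continuous fun p : Fin 2 → ℝ => evec d (p 0) (p 1) := by
  have h : Continuous fun p : Fin 2 → ℝ => (fun i : Fin d =>
      if (i : ℕ) = 0 then p 0 else if (i : ℕ) = 1 then p 1 else 0) := by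
    apply continuous_pi
    intro i
    split_ifs
    · exact continuous_apply 0
    · exact continuous_apply 1
    · exact continuous_const
  exact (PiLp.continuous_toLp 2 fun _ : Fin d => ℝ).comp h

lemma euclidean_coord_le_norm {d : ℕ} (x : EuclideanSpace ℝ (Fin d)) (i : Fin d) :
    |x i| ≤ ‖x‖ := by
  rw [EuclideanSpace.norm_eq]
  have h1 : |x i| = Real.sqrt (‖x i‖ ^ 2) := by
    rw [Real.sqrt_sq_eq_abs, Real.norm_eq_abs, abs_abs]
  rw [h1]
  apply Real.sqrt_le_sqrt
  exact Finset.single_le_sum (f := fun j => ‖x j‖ ^ 2)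
    (fun j _ => by positivity) (Finset.mem_univ i)

/-- For `d ≥ 2` and finite nonempty `T_R, T_B ⊆ ℝ^d`, the set `P_0(T)` is
closed in the real projective line and is preconnected. -/
theorem stmt_2 (d : ℕ) (hd : 2 ≤ d) (TR TB : Finset (EuclideanSpace ℝ (Fin d)))
    (hR : TR.Nonempty) (hB : TB.Nonempty) :
    IsClosed (P0 d TR TB) ∧ IsPreconnected (P0 d TR TB) := by
  classical
  set C : Set (EuclideanSpace ℝ (Fin d)) :=
    (convexHull ℝ (TR : Set (EuclideanSpace ℝ (Fin d)))) -
      (convexHull ℝ (TB : Set (EuclideanSpace ℝ (Fin d)))) with hC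
  set ev : (Fin 2 → ℝ) → EuclideanSpace ℝ (Fin d) :=
    fun p => evec d (p 0) (p 1) with hev
  set K : Set (Fin 2 → ℝ) := ev ⁻¹' C with hK
  -- membership reformulation
  have hmem : ∀ u, u ∈ P0 d TR TB ↔ ∃ (v : Fin 2 → ℝ) (hv : v ≠ 0),
      Projectivization.mk ℝ v hv = u ∧ ∃ t : ℝ, t • v ∈ K := by
    intro u
    constructor
    · rintro ⟨v, hv, hu, r, hr, s, hs, t, ht⟩
      refine ⟨v, hv, hu, t, ?_⟩
      have h1 : ev (t • v) = t • evec d (v 0) (v 1) := by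
        show evec d ((t • v) 0) ((t • v) 1) = _
        rw [evec_smul]
        rfl
      show ev (t • v) ∈ C
      rw [h1, ← ht]
      exact Set.sub_mem_sub hr hs
    · rintro ⟨v, hv, hu, t, ht⟩
      obtain ⟨r, hr, s, hs, hrs⟩ := Set.mem_sub.1 ht
      refine ⟨v, hv, hu, r, hr, s, hs, t, ?_⟩
      rw [hrs]
      show evec d ((t • v) 0) ((t • v) 1) = _
      rw [evec_smul]
      rfl
  -- basic properties of C and K
  have hCcvx : Convex ℝ C :=
    (convex_convexHull ℝ _).sub (convex_convexHull ℝ _)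
  have hCcp : IsCompact C := by
    rw [hC, sub_eq_add_neg]
    exact (TR.finite_toSet.isCompact_convexHull ℝ).add
      (TB.finite_toSet.isCompact_convexHull ℝ).neg
  have hevlin : ∀ (a b : ℝ) (p q : Fin 2 → ℝ),
      ev (a • p + b • q) = a • ev p + b • ev q := by
    intro a b p q
    show evec d ((a • p + b • q) 0) ((a • p + b • q) 1) = _
    have h0 : (a • p + b • q) 0 = a * p 0 + b * q 0 := rfl
    have h1 : (a • p + b • q) 1 = a * p 1 + b * q 1 := rfl
    rw [h0, h1, evec_comb]
  have hKcvx : Convex ℝ K := by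
    intro p hp q hq a b ha hb hab
    show ev (a • p + b • q) ∈ C
    rw [hevlin]
    exact hCcvx hp hq ha hb hab
  have hKcl : IsClosed K := hCcp.isClosed.preimage (evec_continuous d)
  have hKcp : IsCompact K := by
    obtain ⟨M, hM⟩ : ∃ M : ℝ, ∀ x ∈ C, ‖x‖ ≤ M := by
      obtain ⟨M, hM⟩ := hCcp.isBounded.exists_norm_le
      exact ⟨M, hM⟩
    apply Metric.isCompact_of_isClosed_isBounded hKcl
    apply Bornology.IsBounded.subset (Metric.isBounded_closedBall (x := (0 : Fin 2 → ℝ))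
      (r := max M 0))
    intro p hp
    rw [Metric.mem_closedBall, dist_zero_right]
    rw [pi_norm_le_iff_of_nonneg (le_max_right M 0)]
    have hle : ‖ev p‖ ≤ max M 0 := le_trans (hM _ hp) (le_max_left M 0)
    intro i
    fin_cases i
    · have := le_trans (euclidean_coord_le_norm (ev p) ⟨0, by omega⟩) hle
      simpa [ev, evec] using this
    · have := le_trans (euclidean_coord_le_norm (ev p) ⟨1, by omega⟩) hle
      simpa [ev, evec] using this
  -- the quotient map
  have hq : Topology.IsQuotientMap (Projectivization.mk' ℝ :
      {v : Fin 2 → ℝ // v ≠ 0} → Projectivization ℝ (Fin 2 → ℝ)) :=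
    isQuotientMap_quotient_mk'
  -- the preimage of P0 under the quotient map
  have hpre : (Projectivization.mk' ℝ) ⁻¹' (P0 d TR TB)
      = {x : {v : Fin 2 → ℝ // v ≠ 0} | ∃ t : ℝ, t • x.val ∈ K} := by
    ext x
    simp only [Set.mem_preimage, hmem, Set.mem_setOf_eq]
    constructor
    · rintro ⟨v, hv, hvx, t, ht⟩
      rw [Projectivization.mk'_eq_mk] at hvx
      obtain ⟨a, ha⟩ := (Projectivization.mk_eq_mk_iff' ℝ _ _ hv x.2).1 hvx
      refine ⟨t * a, ?_⟩
      rw [mul_smul, ha]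
      exact ht
    · rintro ⟨t, ht⟩
      exact ⟨x.val, x.2, (Projectivization.mk'_eq_mk ℝ x).symm, t, ht⟩
  by_cases h0 : (0 : Fin 2 → ℝ) ∈ K
  · -- P0 is everything
    have hP0 : P0 d TR TB = Set.univ := by
      ext u
      simp only [Set.mem_univ, iff_true]
      rw [hmem]
      exact ⟨u.rep, u.rep_nonzero, u.mk_rep, 0, by simpa using h0⟩
    have hconn : IsConnected ({0}ᶜ : Set (Fin 2 → ℝ)) := by
      apply isConnected_compl_singleton_of_one_lt_rank
      rw [rank_fin_fun]
      exact_mod_cast one_lt_two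
    rw [Set.compl_singleton_eq] at hconn
    haveI : ConnectedSpace {v : Fin 2 → ℝ // v ≠ 0} :=
      Subtype.connectedSpace hconn
    have hsurj : Function.Surjective (Projectivization.mk' ℝ :
        {v : Fin 2 → ℝ // v ≠ 0} → Projectivization ℝ (Fin 2 → ℝ)) := by
      intro u
      exact ⟨⟨u.rep, u.rep_nonzero⟩, by rw [Projectivization.mk'_eq_mk]; exact u.mk_rep⟩
    have himg : (Set.univ : Set (Projectivization ℝ (Fin 2 → ℝ)))
        = (Projectivization.mk' ℝ) '' Set.univ := by
      rw [Set.image_univ, hsurj.range_eq]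
    refine ⟨by rw [hP0]; exact isClosed_univ, ?_⟩
    rw [hP0, himg]
    exact isPreconnected_univ.image _ hq.continuous.continuousOn
  · -- 0 ∉ K
    have h0' : (0 : Fin 2 → ℝ) ∉ K ∪ -K := by
      intro h
      rcases h with h | h
      · exact h0 h
      · rw [Set.mem_neg, neg_zero] at h; exact h0 h
    constructor
    · -- closedness
      rw [← hq.isClosed_preimage, hpre]
      set f : (Fin 2 → ℝ) → (Fin 2 → ℝ) := fun p => ‖p‖⁻¹ • p with hf
      set S : Set (Fin 2 → ℝ) := f '' (K ∪ -K) with hS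
      have hKU : IsCompact (K ∪ -K) := hKcp.union hKcp.neg
      have hfc : ContinuousOn f (K ∪ -K) := by
        apply ContinuousOn.fun_smul _ continuousOn_id
        apply ContinuousOn.fun_inv₀ continuousOn_id.norm
        intro p hp
        exact norm_ne_zero_iff.2 (fun h => h0' (h ▸ hp))
      have hScl : IsClosed S := (hKU.image_of_continuousOn hfc).isClosed
      have hset : {x : {v : Fin 2 → ℝ // v ≠ 0} | ∃ t : ℝ, t • x.val ∈ K}
          = (fun x : {v : Fin 2 → ℝ // v ≠ 0} => f x.val) ⁻¹' S := by
        ext x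
        obtain ⟨v, hv⟩ := x
        simp only [Set.mem_setOf_eq, Set.mem_preimage, hS, Set.mem_image]
        constructor
        · rintro ⟨t, ht⟩
          have ht0 : t ≠ 0 := by
            rintro rfl
            rw [zero_smul] at ht
            exact h0 ht
          have hnv : ‖v‖ ≠ 0 := norm_ne_zero_iff.2 hv
          rcases ht0.lt_or_gt with htneg | htpos
          · refine ⟨-(t • v), Or.inr (by rw [Set.mem_neg, neg_neg]; exact ht), ?_⟩
            rw [hf]
            simp only [norm_neg, norm_smul, Real.norm_eq_abs, abs_of_neg htneg]
            rw [← neg_smul, smul_smul]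
            congr 1
            field_simp
          · refine ⟨t • v, Or.inl ht, ?_⟩
            rw [hf]
            simp only [norm_smul, Real.norm_eq_abs, abs_of_pos htpos]
            rw [smul_smul]
            congr 1
            field_simp
        · rintro ⟨q, hqm, hfq⟩
          have hq0 : q ≠ 0 := fun h => h0' (h ▸ hqm)
          have hnq : ‖q‖ ≠ 0 := norm_ne_zero_iff.2 hq0
          have hqv : q = (‖q‖ * ‖v‖⁻¹) • v := by
            calc q = ‖q‖ • (f q) := by
                  rw [hf, smul_smul, mul_inv_cancel₀ hnq, one_smul]
              _ = ‖q‖ • (‖v‖⁻¹ • v) := by rw [hfq]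
              _ = (‖q‖ * ‖v‖⁻¹) • v := smul_smul _ _ _
          rcases hqm with hqK | hqK
          · exact ⟨‖q‖ * ‖v‖⁻¹, by rw [← hqv]; exact hqK⟩
          · refine ⟨-(‖q‖ * ‖v‖⁻¹), ?_⟩
            rw [neg_smul, ← hqv]
            rwa [Set.mem_neg] at hqK
      rw [hset]
      apply hScl.preimage
      apply Continuous.fun_smul _ continuous_subtype_val
      apply Continuous.fun_inv₀ continuous_subtype_val.norm
      intro x
      exact norm_ne_zero_iff.2 x.2
    · -- preconnectedness
      have hP0img : P0 d TR TB
          = (Projectivization.mk' ℝ) '' (Subtype.val ⁻¹' K) := by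
        ext u
        rw [hmem]
        constructor
        · rintro ⟨v, hv, hvu, t, ht⟩
          have ht0 : t ≠ 0 := by
            rintro rfl
            rw [zero_smul] at ht
            exact h0 ht
          refine ⟨⟨t • v, smul_ne_zero ht0 hv⟩, ht, ?_⟩
          rw [Projectivization.mk'_eq_mk, ← hvu]
          exact (Projectivization.mk_eq_mk_iff' ℝ _ _ _ hv).2 ⟨t, rfl⟩
        · rintro ⟨⟨p, hp⟩, hpK, hup⟩
          refine ⟨p, hp, by rw [← hup, Projectivization.mk'_eq_mk], 1, ?_⟩
          rw [one_smul]
          exact hpK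
      rw [hP0img]
      have hpc : IsPreconnected
          ((Subtype.val : {v : Fin 2 → ℝ // v ≠ 0} → (Fin 2 → ℝ)) ⁻¹' K) := by
        have h2 : IsPreconnected
            ((Subtype.val : {v : Fin 2 → ℝ // v ≠ 0} → (Fin 2 → ℝ)) ''
              ((Subtype.val : {v : Fin 2 → ℝ // v ≠ 0} → (Fin 2 → ℝ)) ⁻¹' K)) := by
          rw [Set.image_preimage_eq_inter_range, Subtype.range_coe_subtype]
          have himg : K ∩ {v : Fin 2 → ℝ | v ≠ 0} = K := by
            ext p
            exact ⟨fun h => h.1, fun h => ⟨h, fun hz => h0 (hz ▸ h)⟩⟩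
          rw [himg]
          exact hKcvx.isPreconnected
        exact Topology.IsInducing.subtypeVal.isPreconnected_image.mp h2
      exact hpc.image _ hq.continuous.continuousOn
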